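/- Let K₂ ⊆ ℂ be the splitting field over ℚ of χ₂ = X⁴ − 80X³ + 1438X² − 80X + 1. Then [K₂ : ℚ] = 8 and the Galois group Gal(K₂/ℚ) is isomorphic to the dihedral group of order 8. -/

import Mathlib

set_option synthInstance.maxHeartbeats 1000000
set_option maxHeartbeats 1000000


open Polynomial IntermediateField

variable {F : Type*} [Field F] [Algebra F ℂ]

/-- Elements of `F⟮α⟯` for `α` quadratic have the form `u + v α`. -/
private lemma mem_adjoin_quad {α x : ℂ} (d : F) (hd : α ^ 2 = algebraMap F ℂ d)
    (hx : x ∈ IntermediateField.adjoin F {α}) :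
    ∃ u v : F, x = algebraMap F ℂ u + algebraMap F ℂ v * α := by
  let T : IntermediateField F ℂ :=
    { carrier := {x | ∃ u v : F, x = algebraMap F ℂ u + algebraMap F ℂ v * α}
      mul_mem' := by
        rintro x y ⟨u, v, rfl⟩ ⟨u', v', rfl⟩
        refine ⟨u * u' + v * v' * d, u * v' + u' * v, ?_⟩
        simp only [map_add, map_mul]
        linear_combination (algebraMap F ℂ v * algebraMap F ℂ v') * hd
      one_mem' := ⟨1, 0, by simp⟩
      add_mem' := by
        rintro x y ⟨u, v, rfl⟩ ⟨u', v', rfl⟩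
        exact ⟨u + u', v + v', by simp only [map_add]; ring⟩
      zero_mem' := ⟨0, 0, by simp⟩
      algebraMap_mem' := fun r => ⟨r, 0, by simp⟩
      inv_mem' := by
        rintro x ⟨u, v, rfl⟩
        by_cases hx0 : algebraMap F ℂ u + algebraMap F ℂ v * α = 0
        · exact ⟨0, 0, by rw [hx0]; simp⟩
        by_cases hN : u ^ 2 - d * v ^ 2 = 0
        · -- then α ∈ range of algebraMap
          have hv : v ≠ 0 := by
            rintro rfl
            apply hx0
            have hu : u = 0 := by
              have : u ^ 2 = 0 := by rw [← hN]; ring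
              exact pow_eq_zero_iff (by norm_num) |>.mp this
            simp [hu]
          have hαr : α = algebraMap F ℂ (u / v) ∨ α = -algebraMap F ℂ (u / v) := by
            have h2 : (α - algebraMap F ℂ (u / v)) * (α + algebraMap F ℂ (u / v)) = 0 := by
              have hmap : (algebraMap F ℂ (u / v)) ^ 2 = algebraMap F ℂ d := by
                rw [← map_pow]
                congr 1
                field_simp
                linear_combination hN
              linear_combination hd - hmap
            rcases mul_eq_zero.mp h2 with h | h
            · exact Or.inl (sub_eq_zero.mp h)
            · exact Or.inr (eq_neg_of_add_eq_zero_left h)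
          rcases hαr with h | h
          · refine ⟨(u + v * (u / v))⁻¹, 0, ?_⟩
            rw [map_inv₀]
            simp only [map_zero, zero_mul, add_zero]
            congr 1
            rw [h, map_add, map_mul]
          · refine ⟨(u + v * (-(u / v)))⁻¹, 0, ?_⟩
            rw [map_inv₀]
            simp only [map_zero, zero_mul, add_zero]
            congr 1
            rw [h, map_add, map_mul, map_neg]
        · refine ⟨u / (u ^ 2 - d * v ^ 2), -(v / (u ^ 2 - d * v ^ 2)), ?_⟩
          refine (eq_inv_of_mul_eq_one_left ?_).symm
          have hN' : (algebraMap F ℂ u) ^ 2 - algebraMap F ℂ d * (algebraMap F ℂ v) ^ 2 ≠ 0 := by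
            intro hc
            apply hN
            apply (algebraMap F ℂ).injective
            rw [map_sub, map_mul, map_pow, map_pow, map_zero]
            exact hc
          simp only [map_div₀, map_sub, map_mul, map_pow, map_neg]
          field_simp
          ring_nf
          linear_combination (-(algebraMap F ℂ v ^ 2)) * hd }
  have hT : IntermediateField.adjoin F {α} ≤ T := by
    apply IntermediateField.adjoin_le_iff.mpr
    rintro y hy
    rcases hy with rfl
    exact ⟨0, 1, by simp⟩
  exact hT hx

/-- Coordinates w.r.t. `1, α` are unique when `α ∉ F`. -/
private lemma coords_unique {α : ℂ} (hα : α ∉ Set.range (algebraMap F ℂ))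
    {u v u' v' : F}
    (h : algebraMap F ℂ u + algebraMap F ℂ v * α = algebraMap F ℂ u' + algebraMap F ℂ v' * α) :
    u = u' ∧ v = v' := by
  have hinj := (algebraMap F ℂ).injective
  by_cases hv : v = v'
  · subst hv
    exact ⟨hinj (add_right_cancel h), rfl⟩
  · exfalso
    apply hα
    refine ⟨(u - u') / (v' - v), ?_⟩
    have hvv : algebraMap F ℂ (v' - v) ≠ 0 := by
      simpa [sub_eq_zero] using fun hc => hv ((algebraMap F ℂ).injective hc).symm
    rw [map_div₀, div_eq_iff hvv, map_sub, map_sub]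
    linear_combination h


open Polynomial IntermediateField

private lemma finrank_quad {F : Type*} [Field F] [Algebra F ℂ] {α : ℂ} (d : F)
    (hd : α ^ 2 = algebraMap F ℂ d) (hα : α ∉ Set.range (algebraMap F ℂ)) :
    Module.finrank F (IntermediateField.adjoin F {α}) = 2 := by
  have hint : IsIntegral F α := by
    refine ⟨X ^ 2 - C d, ?_, ?_⟩
    · apply Polynomial.monic_X_pow_sub_C _ (by norm_num)
    · simp [hd]
  rw [IntermediateField.adjoin.finrank hint]
  have hle : (minpoly F α).natDegree ≤ 2 := by
    have hne : (X ^ 2 - C d : F[X]) ≠ 0 := by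
      intro hc
      have := congrArg (Polynomial.coeff · 2) hc
      simp [Polynomial.coeff_X_pow] at this
    have := minpoly.degree_le_of_ne_zero F α hne (by simp [hd])
    have hdeg : (X ^ 2 - C d : F[X]).degree = 2 := by
      rw [Polynomial.degree_X_pow_sub_C (by norm_num : 0 < 2)]
      rfl
    rw [hdeg] at this
    exact Polynomial.natDegree_le_iff_degree_le.mpr this
  have h1 : (minpoly F α).natDegree ≠ 1 := by
    intro hc
    exact hα (minpoly.natDegree_eq_one_iff.mp hc)
  have h0 : 0 < (minpoly F α).natDegree := minpoly.natDegree_pos hint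
  omega


noncomputable section Stmt12

namespace Stmt12

def a : ℝ := Real.sqrt 41
def s : ℝ := Real.sqrt 5
def b : ℝ := Real.sqrt (440 + 40 * a)
def c : ℝ := Real.sqrt (440 - 40 * a)

lemma ha : a ^ 2 = 41 := Real.sq_sqrt (by norm_num)
lemma ha0 : 0 ≤ a := Real.sqrt_nonneg _
lemma ha7 : a < 7 := by nlinarith [ha, ha0]
lemma ha6 : 6 < a := by nlinarith [ha, ha0]
lemma hs : s ^ 2 = 5 := Real.sq_sqrt (by norm_num)
lemma hs0 : 0 ≤ s := Real.sqrt_nonneg _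
lemma hs_pos : 0 < s := by nlinarith [hs, hs0]
lemma hb : b ^ 2 = 440 + 40 * a := Real.sq_sqrt (by nlinarith [ha0])
lemma hb0 : 0 ≤ b := Real.sqrt_nonneg _
lemma hb_pos : 0 < b := by nlinarith [hb, hb0, ha0]
lemma hc : c ^ 2 = 440 - 40 * a := Real.sq_sqrt (by nlinarith [ha7])
lemma hc0 : 0 ≤ c := Real.sqrt_nonneg _
lemma hc_pos : 0 < c := by nlinarith [hc, hc0, ha7]
lemma hbc : b * c = 160 * s := by
  have h1 : (b * c) ^ 2 = (160 * s) ^ 2 := by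
    rw [mul_pow, hb, hc, mul_pow, hs]
    nlinarith [ha]
  have h2 : 0 ≤ b * c := mul_nonneg hb0 hc0
  have h3 : 0 ≤ 160 * s := by nlinarith [hs0]
  nlinarith [h1, h2, h3]

def A : ℂ := (a : ℂ)
def S : ℂ := (s : ℂ)
def B : ℂ := (b : ℂ)
def Cc : ℂ := (c : ℂ)

lemma hA : A ^ 2 = 41 := by rw [A, ← Complex.ofReal_pow, ha]; norm_num
lemma hS : S ^ 2 = 5 := by rw [S, ← Complex.ofReal_pow, hs]; norm_num
lemma hB : B ^ 2 = 440 + 40 * A := by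
  rw [B, A, ← Complex.ofReal_pow, hb]; push_cast; ring
lemma hCc : Cc ^ 2 = 440 - 40 * A := by
  rw [Cc, A, ← Complex.ofReal_pow, hc]; push_cast; ring
lemma hBC : B * Cc = 160 * S := by
  rw [B, Cc, S, ← Complex.ofReal_mul, hbc]; push_cast; ring

def r1 : ℂ := 20 + A + B
def r2 : ℂ := 20 + A - B
def r3 : ℂ := 20 - A + Cc
def r4 : ℂ := 20 - A - Cc

lemma quartic (x : ℂ) :
    x ^ 4 - 80 * x ^ 3 + 1438 * x ^ 2 - 80 * x + 1
      = (x - r1) * (x - r2) * (x - r3) * (x - r4) := by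
  rw [r1, r2, r3, r4]
  linear_combination
    (-((x - (20 - A + Cc)) * (x - (20 - A - Cc)))) * (hA - hB)
    + (-(x ^ 2 - (40 + 2 * A) * x + 1)) * (hA - hCc) + (4 * x ^ 2) * hA

-- distinctness
lemma hr12 : r1 ≠ r2 := by
  rw [r1, r2]
  intro h
  have : B = 0 := by linear_combination h / 2
  rw [B] at this
  have hb0' : b = 0 := by exact_mod_cast this
  exact absurd hb0' (ne_of_gt hb_pos)
end Stmt12

namespace Stmt12
open Polynomial

lemma hr34 : r3 ≠ r4 := by
  rw [r3, r4]; intro h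
  have : Cc = 0 := by linear_combination h / 2
  rw [Cc] at this
  have : c = 0 := by exact_mod_cast this
  exact absurd this (ne_of_gt hc_pos)

lemma hr13 : r1 ≠ r3 := by
  rw [r1, r3, A, B, Cc]; intro h
  have h' : (20 + a + b : ℝ) = 20 - a + c := by exact_mod_cast h
  nlinarith [hb, hc, hb0, hc0, ha6]

lemma hr14 : r1 ≠ r4 := by
  rw [r1, r4, A, B, Cc]; intro h
  have h' : (20 + a + b : ℝ) = 20 - a - c := by exact_mod_cast h
  nlinarith [hb_pos, hc_pos, ha6]

lemma hr23 : r2 ≠ r3 := by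
  rw [r2, r3, A, B, Cc]; intro h
  have h' : (20 + a - b : ℝ) = 20 - a + c := by exact_mod_cast h
  nlinarith [hb, hc, hb0, hc0, ha6, ha]

lemma hr24 : r2 ≠ r4 := by
  rw [r2, r4, A, B, Cc]; intro h
  have h' : (20 + a - b : ℝ) = 20 - a - c := by exact_mod_cast h
  have hbc2 : b - c = 2 * a := by linarith
  have h1 : b ^ 2 + c ^ 2 - 2 * (b * c) = 4 * a ^ 2 := by linear_combination (b - c + 2 * a) * hbc2
  rw [hbc] at h1
  have h2 : s = 716 / 320 := by linarith [hb, hc, ha, h1]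
  have := hs
  rw [h2] at this
  norm_num at this

def q : ℚ[X] := X ^ 4 - 80 * X ^ 3 + 1438 * X ^ 2 - 80 * X + 1

lemma q_natDegree : q.natDegree = 4 := by
  unfold q; compute_degree!

lemma q_ne_zero : q ≠ 0 := by
  intro h
  have := q_natDegree
  rw [h] at this
  simp at this

lemma aeval_q (x : ℂ) :
    aeval x q = x ^ 4 - 80 * x ^ 3 + 1438 * x ^ 2 - 80 * x + 1 := by
  simp [q, map_add, map_sub, map_mul, map_pow, map_ofNat]

lemma q_rootSet : q.rootSet ℂ = {r1, r2, r3, r4} := by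
  ext x
  rw [Polynomial.mem_rootSet]
  simp only [Set.mem_insert_iff, Set.mem_singleton_iff]
  constructor
  · rintro ⟨-, hx⟩
    rw [aeval_q, quartic] at hx
    rcases mul_eq_zero.mp hx with hx | hx
    · rcases mul_eq_zero.mp hx with hx | hx
      · rcases mul_eq_zero.mp hx with hx | hx
        · exact Or.inl (sub_eq_zero.mp hx)
        · exact Or.inr (Or.inl (sub_eq_zero.mp hx))
      · exact Or.inr (Or.inr (Or.inl (sub_eq_zero.mp hx)))
    · exact Or.inr (Or.inr (Or.inr (sub_eq_zero.mp hx)))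
  · intro hx
    refine ⟨q_ne_zero, ?_⟩
    rw [aeval_q, quartic]
    rcases hx with rfl | rfl | rfl | rfl
    · simp
    · simp
    · simp
    · simp

lemma q_map_fact : q.map (algebraMap ℚ ℂ) =
    (X - C r1) * (X - C r2) * (X - C r3) * (X - C r4) := by
  apply Polynomial.funext
  intro x
  rw [Polynomial.eval_map, ← Polynomial.aeval_def, aeval_q]
  simp only [Polynomial.eval_mul, Polynomial.eval_sub, Polynomial.eval_X, Polynomial.eval_C]
  exact quartic x

lemma q_separable : q.Separable := by
  rw [← Polynomial.separable_map (algebraMap ℚ ℂ), q_map_fact]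
  have h : (X - C r1) * (X - C r2) * (X - C r3) * (X - C r4)
      = ∏ i : Fin 4, (X - C (![r1, r2, r3, r4] i)) := by
    rw [Fin.prod_univ_four]
    norm_num
    rfl
  rw [h]
  apply Polynomial.separable_prod_X_sub_C_iff.mpr
  intro i j hij
  fin_cases i <;> fin_cases j <;>
    simp_all [hr12, hr13, hr14, hr23, hr24, hr34,
      hr12.symm, hr13.symm, hr14.symm, hr23.symm, hr24.symm, hr34.symm]

end Stmt12

namespace Stmt12
open Polynomial IntermediateField

lemma not_sq_aux {n k : ℕ} (h1 : k * k < n) (h2 : n < (k+1) * (k+1)) (w : ℚ) :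
    w ^ 2 ≠ (n : ℚ) := by
  intro h
  have hsq : IsSquare (n : ℚ) := ⟨w, by rw [← h]; ring⟩
  rw [Rat.isSquare_natCast_iff] at hsq
  obtain ⟨r, hr⟩ := hsq
  rcases lt_or_ge k r with hk | hk
  · have : (k+1) * (k+1) ≤ r * r := Nat.mul_le_mul hk hk
    omega
  · have : r * r ≤ k * k := Nat.mul_le_mul hk hk
    omega

lemma not_sq5 (w : ℚ) : w ^ 2 ≠ 5 := by
  have := not_sq_aux (n := 5) (k := 2) (by norm_num) (by norm_num) w
  simpa using this

lemma not_sq41 (w : ℚ) : w ^ 2 ≠ 41 := by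
  have := not_sq_aux (n := 41) (k := 6) (by norm_num) (by norm_num) w
  simpa using this

lemma not_sq205 (w : ℚ) : w ^ 2 ≠ 205 := by
  have := not_sq_aux (n := 205) (k := 14) (by norm_num) (by norm_num) w
  simpa using this

lemma not_sq128000 (w : ℚ) : w ^ 2 ≠ 128000 := by
  have := not_sq_aux (n := 128000) (k := 357) (by norm_num) (by norm_num) w
  simpa using this

lemma not_sq5120 (w : ℚ) : w ^ 2 ≠ 5120 := by
  have := not_sq_aux (n := 5120) (k := 71) (by norm_num) (by norm_num) w
  simpa using this

lemma range_algebraMap {F : Type*} [Field F] [Algebra F ℂ] (E : IntermediateField F ℂ) :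
    Set.range (algebraMap ↥E ℂ) = (E : Set ℂ) := by
  ext x
  constructor
  · rintro ⟨y, rfl⟩
    exact y.2
  · intro hx
    exact ⟨⟨x, hx⟩, rfl⟩

lemma nm1 : A ∉ Set.range (algebraMap ℚ ℂ) := by
  rintro ⟨w, hw⟩
  have hw' : (w : ℂ) = A := by rw [← hw]; norm_num
  rw [A] at hw'
  have : (w : ℝ) = a := by exact_mod_cast hw'
  have : (w : ℝ) ^ 2 = 41 := by rw [this, ha]
  have : w ^ 2 = (41 : ℚ) := by exact_mod_cast this
  exact not_sq41 w this

def F1 : IntermediateField ℚ ℂ := IntermediateField.adjoin ℚ {A}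

lemma hd41 : A ^ 2 = algebraMap ℚ ℂ 41 := by rw [hA]; norm_num

lemma nm2 : S ∉ (F1 : Set ℂ) := by
  intro hS'
  obtain ⟨u, v, hdec⟩ := mem_adjoin_quad (41 : ℚ) hd41 hS'
  have key : algebraMap ℚ ℂ (u^2 + 41*v^2) + algebraMap ℚ ℂ (2*u*v) * A
      = algebraMap ℚ ℂ 5 + algebraMap ℚ ℂ 0 * A := by
    simp only [map_add, map_mul, map_pow, map_ofNat, map_zero]
    linear_combination hS - (S + (algebraMap ℚ ℂ u + algebraMap ℚ ℂ v * A)) * hdec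
      - (algebraMap ℚ ℂ v)^2 * hA
  obtain ⟨h1, h2⟩ := coords_unique nm1 key
  rcases mul_eq_zero.mp (by linarith : u * v = 0) with hu | hv
  · -- u = 0 : 41 v^2 = 5
    rw [hu] at h1
    have : (41 * v) ^ 2 = 205 := by nlinarith [h1]
    exact not_sq205 _ this
  · rw [hv] at h1
    have : u ^ 2 = 5 := by nlinarith [h1]
    exact not_sq5 _ this

end Stmt12

namespace Stmt12
open Polynomial IntermediateField

lemma nm2' : S ∉ Set.range (algebraMap ↥F1 ℂ) := by
  rw [range_algebraMap]; exact nm2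

def F2 : IntermediateField ↥F1 ℂ := IntermediateField.adjoin ↥F1 {S}

lemma hd5 : S ^ 2 = algebraMap ↥F1 ℂ (5 : ↥F1) := by
  rw [hS, map_ofNat]

lemma A_mem_F1 : A ∈ F1 := IntermediateField.subset_adjoin ℚ {A} rfl

/-- Decompose an element of F1 over ℚ. -/
lemma decompF1 (x : ↥F1) :
    ∃ p q : ℚ, algebraMap ↥F1 ℂ x = algebraMap ℚ ℂ p + algebraMap ℚ ℂ q * A :=
  mem_adjoin_quad (41 : ℚ) hd41 x.2

lemma nm3 : B ∉ (F2 : Set ℂ) := by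
  intro hB'
  obtain ⟨u, v, hdec⟩ := mem_adjoin_quad (5 : ↥F1) hd5 hB'
  -- 440 + 40A as an element of F1
  have hmem : (440 : ℂ) + 40 * A ∈ F1 := by
    refine F1.add_mem ?_ (F1.mul_mem ?_ A_mem_F1)
    · have := F1.algebraMap_mem (440 : ℚ)
      rwa [show algebraMap ℚ ℂ (440 : ℚ) = (440 : ℂ) by norm_num] at this
    · have := F1.algebraMap_mem (40 : ℚ)
      rwa [show algebraMap ℚ ℂ (40 : ℚ) = (40 : ℂ) by norm_num] at this
  set e : ↥F1 := ⟨440 + 40 * A, hmem⟩ with he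
  have key : algebraMap ↥F1 ℂ (u^2 + 5*v^2) + algebraMap ↥F1 ℂ (2*u*v) * S
      = algebraMap ↥F1 ℂ e + algebraMap ↥F1 ℂ 0 * S := by
    have he' : algebraMap ↥F1 ℂ e = 440 + 40 * A := rfl
    have h5' : algebraMap ↥F1 ℂ (5 : ↥F1) = (5 : ℂ) := map_ofNat _ 5
    simp only [map_add, map_mul, map_pow, map_zero, map_ofNat, he', h5']
    linear_combination hB - (B + (algebraMap ↥F1 ℂ u + algebraMap ↥F1 ℂ v * S)) * hdec
      - (algebraMap ↥F1 ℂ v)^2 * hS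
  obtain ⟨h1, h2⟩ := coords_unique nm2' key
  have huv : u * v = 0 := by
    have : (2 : ↥F1) * (u * v) = 0 := by rw [← mul_assoc]; exact h2
    rcases mul_eq_zero.mp this with h | h
    · exact absurd h (by norm_num)
    · exact h
  rcases mul_eq_zero.mp huv with hu | hv
  · -- u = 0 : B = v * S, (440+40A) = 5 v², v = p + qA
    rw [hu] at hdec
    simp only [map_zero, zero_add] at hdec
    obtain ⟨p, q, hv'⟩ := decompF1 v
    -- B = (p + qA) S
    have hBsq : (440 : ℂ) + 40 * A = 5 * ((algebraMap ℚ ℂ p + algebraMap ℚ ℂ q * A))^2 := by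
      linear_combination -hB + (B + algebraMap ↥F1 ℂ v * S) * hdec + (algebraMap ↥F1 ℂ v)^2 * hS
        + (5 * (algebraMap ↥F1 ℂ v + (algebraMap ℚ ℂ p + algebraMap ℚ ℂ q * A))) * hv'
    have key2 : algebraMap ℚ ℂ (5*p^2 + 205*q^2) + algebraMap ℚ ℂ (10*p*q) * A
        = algebraMap ℚ ℂ 440 + algebraMap ℚ ℂ 40 * A := by
      simp only [map_add, map_mul, map_pow, map_ofNat]
      linear_combination -hBsq - (5 * (algebraMap ℚ ℂ q)^2) * hA
    obtain ⟨k1, k2⟩ := coords_unique nm1 key2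
    have hpq : p * q = 4 := by linarith
    have hq : q ≠ 0 := by rintro rfl; simp at hpq
    have hquart : 41 * q^4 - 88*q^2 + 16 = 0 := by
      have k1' : p^2 + 41*q^2 = 88 := by linarith
      linear_combination (q^2) * k1' - (p*q + 4) * hpq
    have : (82*q^2 - 88)^2 = 5120 := by linear_combination 164 * hquart
    exact not_sq5120 _ this
  · -- v = 0 : B = u ∈ F1
    rw [hv] at hdec
    simp only [map_zero, zero_mul, add_zero] at hdec
    obtain ⟨p, q, hu'⟩ := decompF1 u
    have hu'' : B = algebraMap ℚ ℂ p + algebraMap ℚ ℂ q * A := by rw [hdec, hu']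
    have key2 : algebraMap ℚ ℂ (p^2 + 41*q^2) + algebraMap ℚ ℂ (2*p*q) * A
        = algebraMap ℚ ℂ 440 + algebraMap ℚ ℂ 40 * A := by
      simp only [map_add, map_mul, map_pow, map_ofNat]
      linear_combination hB - (B + (algebraMap ℚ ℂ p + algebraMap ℚ ℂ q * A)) * hu''
        - (algebraMap ℚ ℂ q)^2 * hA
    obtain ⟨k1, k2⟩ := coords_unique nm1 key2
    have hpq : p * q = 20 := by linarith
    have hq : q ≠ 0 := by rintro rfl; simp at hpq
    have hquart : 41 * q^4 - 440*q^2 + 400 = 0 := by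
      linear_combination (q^2) * k1 - (p*q + 20) * hpq
    have : (82*q^2 - 440)^2 = 128000 := by linear_combination 164 * hquart
    exact not_sq128000 _ this

end Stmt12

namespace Stmt12
open Polynomial IntermediateField

def F2' : IntermediateField ℚ ℂ := IntermediateField.restrictScalars ℚ F2

lemma nm3' : B ∉ Set.range (algebraMap ↥F2' ℂ) := by
  rw [range_algebraMap]
  exact nm3

lemma A_mem_F2' : A ∈ F2' := by
  have : A ∈ F2 := by
    have := F2.algebraMap_mem (⟨A, A_mem_F1⟩ : ↥F1)
    simpa using this
  exact this

lemma e2_mem : (440 : ℂ) + 40 * A ∈ F2' := by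
  refine F2'.add_mem ?_ (F2'.mul_mem ?_ A_mem_F2')
  · have := F2'.algebraMap_mem (440 : ℚ)
    rwa [show algebraMap ℚ ℂ (440 : ℚ) = (440 : ℂ) by norm_num] at this
  · have := F2'.algebraMap_mem (40 : ℚ)
    rwa [show algebraMap ℚ ℂ (40 : ℚ) = (40 : ℂ) by norm_num] at this

def e2 : ↥F2' := ⟨440 + 40 * A, e2_mem⟩

lemma hdB : B ^ 2 = algebraMap ↥F2' ℂ e2 := by
  rw [hB]; rfl

def F3 : IntermediateField ↥F2' ℂ := IntermediateField.adjoin ↥F2' {B}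

def F3' : IntermediateField ℚ ℂ := IntermediateField.restrictScalars ℚ F3

lemma d1 : Module.finrank ℚ ↥F1 = 2 := finrank_quad (41 : ℚ) hd41 nm1

lemma d2 : Module.finrank ↥F1 ↥F2 = 2 := finrank_quad (5 : ↥F1) hd5 nm2'

lemma d3 : Module.finrank ↥F2' ↥F3 = 2 := finrank_quad e2 hdB nm3'

lemma dF2' : Module.finrank ℚ ↥F2' = 4 := by
  have h := Module.finrank_mul_finrank ℚ ↥F1 ↥F2
  rw [d1, d2] at h
  exact h.symm ▸ (by norm_num : (2 : ℕ) * 2 = 4) ▸ rfl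

lemma dF3' : Module.finrank ℚ ↥F3' = 8 := by
  have h := Module.finrank_mul_finrank ℚ ↥F2' ↥F3
  rw [dF2', d3] at h
  exact h.symm ▸ rfl

end Stmt12

namespace Stmt12
open Polynomial IntermediateField

lemma num_mem (E : IntermediateField ℚ ℂ) (x : ℂ) (n : ℚ) (h : x = algebraMap ℚ ℂ n) :
    x ∈ E := h ▸ E.algebraMap_mem n

lemma B_ne_zero : B ≠ 0 := by
  rw [B]
  exact_mod_cast ne_of_gt hb_pos

lemma hCc_eq : Cc = 160 * S / B := by
  rw [eq_div_iff B_ne_zero]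
  linear_combination hBC

lemma adjoin_roots_eq : IntermediateField.adjoin ℚ (q.rootSet ℂ) = F3' := by
  rw [q_rootSet]
  apply le_antisymm
  · -- roots ∈ F3'
    have hA3 : A ∈ F3' := by
      have h2 : A ∈ F3 := by simpa using F3.algebraMap_mem (⟨A, A_mem_F2'⟩ : ↥F2')
      exact h2
    have hS3 : S ∈ F3' := by
      have h1 : S ∈ F2' := IntermediateField.subset_adjoin ↥F1 {S} rfl
      have h2 : S ∈ F3 := by simpa using F3.algebraMap_mem (⟨S, h1⟩ : ↥F2')
      exact h2
    have hB3 : B ∈ F3' := IntermediateField.subset_adjoin ↥F2' {B} rfl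
    have hCc3 : Cc ∈ F3' := by
      rw [hCc_eq]
      exact F3'.div_mem (F3'.mul_mem (num_mem _ _ 160 (by norm_num)) hS3) hB3
    have h20 : (20 : ℂ) ∈ F3' := num_mem _ _ 20 (by norm_num)
    apply IntermediateField.adjoin_le_iff.mpr
    intro x hx
    rcases hx with rfl | rfl | rfl | rfl
    · exact F3'.add_mem (F3'.add_mem h20 hA3) hB3
    · exact F3'.sub_mem (F3'.add_mem h20 hA3) hB3
    · exact F3'.add_mem (F3'.sub_mem h20 hA3) hCc3
    · exact F3'.sub_mem (F3'.sub_mem h20 hA3) hCc3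
  · -- F3' ≤ adjoin roots
    set E := IntermediateField.adjoin ℚ ({r1, r2, r3, r4} : Set ℂ) with hEdef
    have hr1 : r1 ∈ E := IntermediateField.subset_adjoin _ _ (by left; rfl)
    have hr2 : r2 ∈ E := IntermediateField.subset_adjoin _ _ (by right; left; rfl)
    have hr3 : r3 ∈ E := IntermediateField.subset_adjoin _ _ (by right; right; left; rfl)
    have hr4 : r4 ∈ E := IntermediateField.subset_adjoin _ _ (by right; right; right; rfl)
    have hAE : A ∈ E := by
      have : A = (r1 + r2) / 2 - 20 := by rw [r1, r2]; ring
      rw [this]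
      exact E.sub_mem (E.div_mem (E.add_mem hr1 hr2) (num_mem _ _ 2 (by norm_num)))
        (num_mem _ _ 20 (by norm_num))
    have hBE : B ∈ E := by
      have : B = (r1 - r2) / 2 := by rw [r1, r2]; ring
      rw [this]
      exact E.div_mem (E.sub_mem hr1 hr2) (num_mem _ _ 2 (by norm_num))
    have hCcE : Cc ∈ E := by
      have : Cc = (r3 - r4) / 2 := by rw [r3, r4]; ring
      rw [this]
      exact E.div_mem (E.sub_mem hr3 hr4) (num_mem _ _ 2 (by norm_num))
    have hSE : S ∈ E := by
      have : S = B * Cc / 160 := by rw [hBC]; ring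
      rw [this]
      exact E.div_mem (E.mul_mem hBE hCcE) (num_mem _ _ 160 (by norm_num))
    have hF1E : F1 ≤ E := by
      rw [F1]
      exact IntermediateField.adjoin_le_iff.mpr (by rintro x rfl; exact hAE)
    have hF2E : F2' ≤ E := by
      rw [F2', F2]; refine (IntermediateField.restrictScalars_adjoin (K := F1) (S := {S})).le.trans ?_
      apply IntermediateField.adjoin_le_iff.mpr
      rintro x (hx | rfl)
      · exact hF1E hx
      · exact hSE
    rw [F3', F3]; refine (IntermediateField.restrictScalars_adjoin (K := F2') (S := {B})).le.trans ?_
    apply IntermediateField.adjoin_le_iff.mpr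
    rintro x (hx | rfl)
    · exact hF2E hx
    · exact hBE

end Stmt12

namespace Stmt12
open Equiv

private def dihFun : DihedralGroup 4 → Perm (Fin 4)
  | .r i => (finRotate 4) ^ i.val
  | .sr i => (Equiv.swap 1 3) * (finRotate 4) ^ i.val

private def dihHom : DihedralGroup 4 →* Perm (Fin 4) where
  toFun := dihFun
  map_one' := by decide
  map_mul' := by decide

private lemma dihHom_inj : Function.Injective dihHom := by decide

private lemma sylow_aux {H : Subgroup (Perm (Fin 4))} (hH : Nat.card H = 8) :
    ¬ (2 ∣ H.index) := by
  have h24 : Nat.card (Perm (Fin 4)) = 24 := by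
    rw [Nat.card_eq_fintype_card]; decide
  have := Subgroup.card_mul_index H
  rw [hH, h24] at this
  have : H.index = 3 := by omega
  omega

private lemma group_iso_D4 {G : Type*} [Group G] (Φ : G →* Perm (Fin 4))
    (hΦ : Function.Injective Φ) (hG : Nat.card G = 8) :
    Nonempty (G ≃* DihedralGroup 4) := by
  haveI : Fact (Nat.Prime 2) := ⟨by norm_num⟩
  have e1 : G ≃* Φ.range := MonoidHom.ofInjective hΦ
  have hcardH : Nat.card Φ.range = 8 := by
    rw [← Nat.card_congr e1.toEquiv, hG]
  have hcardP : Nat.card dihHom.range = 8 := by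
    rw [← Nat.card_congr (MonoidHom.ofInjective dihHom_inj).toEquiv]
    simp [Nat.card_eq_fintype_card]
    decide
  have hpH : IsPGroup 2 Φ.range := IsPGroup.of_card (n := 3) (by rw [hcardH]; norm_num)
  have hpP : IsPGroup 2 dihHom.range := IsPGroup.of_card (n := 3) (by rw [hcardP]; norm_num)
  let HS : Sylow 2 (Perm (Fin 4)) := hpH.toSylow (sylow_aux hcardH)
  let PS : Sylow 2 (Perm (Fin 4)) := hpP.toSylow (sylow_aux hcardP)
  have e2 : HS ≃* PS := Sylow.equiv HS PS
  have e3 : (dihHom.range) ≃* DihedralGroup 4 := (MonoidHom.ofInjective dihHom_inj).symm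
  exact ⟨(e1.trans (e2.trans e3))⟩

end Stmt12

namespace Stmt12
open Polynomial

def permCongrHom {α β : Type*} (e : α ≃ β) : Equiv.Perm α →* Equiv.Perm β where
  toFun := fun p => e.permCongr p
  map_one' := by ext x; simp
  map_mul' := by intro p q; ext x; simp [Equiv.permCongr]

lemma permCongrHom_inj {α β : Type*} (e : α ≃ β) : Function.Injective (permCongrHom e) :=
  e.permCongr.injective

end Stmt12

open Polynomial

open Stmt12 in
/-- The splitting field `K₂ ⊆ ℂ` of `χ₂ = X⁴ - 80X³ + 1438X² - 80X + 1` over `ℚ` has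
degree 8 and Galois group isomorphic to the dihedral group of order 8. -/
theorem stmt_12 (χ₂ : ℚ[X]) (hχ : χ₂ = X ^ 4 - 80 * X ^ 3 + 1438 * X ^ 2 - 80 * X + 1)
    (K₂ : IntermediateField ℚ ℂ) (hK : K₂ = IntermediateField.adjoin ℚ (χ₂.rootSet ℂ)) :
    Module.finrank ℚ K₂ = 8 ∧ Nonempty ((K₂ ≃ₐ[ℚ] K₂) ≃* DihedralGroup 4) := by
  have hq : χ₂ = q := hχ
  subst hK
  subst hq
  haveI hsplits : Fact (q.map (algebraMap ℚ ℂ)).Splits := ⟨IsAlgClosed.splits _⟩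
  haveI : Polynomial.IsSplittingField ℚ ↥(IntermediateField.adjoin ℚ (q.rootSet ℂ)) q :=
    IntermediateField.adjoin_rootSet_isSplittingField hsplits.out
  set E := IntermediateField.adjoin ℚ (q.rootSet ℂ) with hE
  haveI : FiniteDimensional ℚ ↥E := Polynomial.IsSplittingField.finiteDimensional ↥E q
  have hdeg : Module.finrank ℚ ↥E = 8 := by
    rw [hE, adjoin_roots_eq]
    exact dF3'
  haveI : IsGalois ℚ ↥E := IsGalois.of_separable_splitting_field q_separable
  have hcard : Nat.card (↥E ≃ₐ[ℚ] ↥E) = 8 := by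
    rw [IsGalois.card_aut_eq_finrank, hdeg]
  have hcardroot : Fintype.card (q.rootSet ℂ) = 4 := by
    rw [Polynomial.card_rootSet_eq_natDegree q_separable hsplits.out, q_natDegree]
  have er : q.rootSet ℂ ≃ Fin 4 := Fintype.equivFinOfCardEq hcardroot
  have eSp : ↥E ≃ₐ[ℚ] q.SplittingField := Polynomial.IsSplittingField.algEquiv ↥E q
  have eAut : (↥E ≃ₐ[ℚ] ↥E) ≃* q.Gal := AlgEquiv.autCongr eSp
  let Φ : (↥E ≃ₐ[ℚ] ↥E) →* Equiv.Perm (Fin 4) :=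
    ((permCongrHom er).comp (Polynomial.Gal.galActionHom q ℂ)).comp eAut.toMonoidHom
  have hΦ : Function.Injective Φ :=
    (((permCongrHom_inj er).comp (Polynomial.Gal.galActionHom_injective q ℂ)).comp
      eAut.injective : Function.Injective
        (⇑(permCongrHom er) ∘ ⇑(Polynomial.Gal.galActionHom q ℂ) ∘ ⇑eAut))
  exact ⟨hdeg, group_iso_D4 Φ hΦ hcard⟩
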